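/- There are exactly 9 triples (x, y, z) of positive integers satisfying x*y*z = x^3 + y + 1. -/
import Mathlib

set_option maxHeartbeats 1000000 in
lemma mohanty_int (X Y Z : ℤ) (hX : 1 ≤ X) (hY : 1 ≤ Y) (hZ : 1 ≤ Z)
    (hE : X * Y * Z = X ^ 3 + Y + 1) : X ≤ 5 ∧ Z ≤ 8 := by
  have hb1 : X * (Y * Z - X ^ 2) = Y + 1 := by linear_combination hE
  obtain ⟨b, hb⟩ : ∃ b : ℤ, b = Y * Z - X ^ 2 := ⟨_, rfl⟩
  have hb1' : X * b = Y + 1 := by rw [hb]; exact hb1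
  have hbpos : 1 ≤ b := by nlinarith
  obtain ⟨s, hs⟩ : ∃ s : ℤ, s = b * Z - X := ⟨_, rfl⟩
  have hs1 : X * s = b + Z := by
    rw [hs, hb]; nlinarith [hb1]
  have hbz : b * Z = X + s := by rw [hs]; ring
  have hspos : 1 ≤ s := by nlinarith
  have hxle : X ≤ 5 := by
    by_contra hc
    push_neg at hc
    have hx6 : 6 ≤ X := by linarith
    rcases eq_or_lt_of_le hspos with hseq | hsgt
    · -- s = 1
      have hs' : s = 1 := hseq.symm
      have h1 : b * Z = X + 1 := by rw [hbz, hs']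
      have h2 : b + Z = X := by rw [hs'] at hs1; linarith
      have hb2 : 2 ≤ b := by
        by_contra hbb
        push_neg at hbb
        have hbe : b = 1 := by omega
        rw [hbe] at h1 h2
        linarith
      have hz2 : 2 ≤ Z := by
        by_contra hzz
        push_neg at hzz
        have hze : Z = 1 := by omega
        rw [hze] at h1 h2
        linarith
      nlinarith [mul_nonneg (by linarith : (0:ℤ) ≤ b - 2) (by linarith : (0:ℤ) ≤ Z - 2)]
    · have hs2 : 2 ≤ s := by linarith
      nlinarith [mul_nonneg (by linarith : (0:ℤ) ≤ b - 1) (by linarith : (0:ℤ) ≤ Z - 1),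
        mul_nonneg (by linarith : (0:ℤ) ≤ X - 1) (by linarith : (0:ℤ) ≤ s - 2)]
  refine ⟨hxle, ?_⟩
  rcases eq_or_lt_of_le hX with hx1 | hx2
  · -- X = 1
    have hx1' : X = 1 := hx1.symm
    rw [hx1'] at hE
    have hYZ : Y * Z = Y + 2 := by linarith
    by_contra hzc
    push_neg at hzc
    nlinarith [mul_nonneg (by linarith : (0:ℤ) ≤ Y - 1) (by linarith : (0:ℤ) ≤ Z - 4)]
  · have hx2' : 2 ≤ X := by linarith
    have hsle : s ≤ 3 := by
      by_contra hsc
      push_neg at hsc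
      nlinarith [mul_nonneg (by linarith : (0:ℤ) ≤ b - 1) (by linarith : (0:ℤ) ≤ Z - 1),
        mul_nonneg (by linarith : (0:ℤ) ≤ X - 2) (by linarith : (0:ℤ) ≤ s - 4)]
    nlinarith [mul_nonneg (by linarith : (0:ℤ) ≤ b - 1) (by linarith : (0:ℤ) ≤ Z)]

lemma mohanty_bounds (x y z : ℕ) (hx : 0 < x) (hy : 0 < y) (hz : 0 < z)
    (h : x * y * z = x ^ 3 + y + 1) : x ≤ 5 ∧ z ≤ 8 := by
  have := mohanty_int x y z (by exact_mod_cast hx) (by exact_mod_cast hy)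
    (by exact_mod_cast hz) (by exact_mod_cast h)
  exact ⟨by exact_mod_cast this.1, by exact_mod_cast this.2⟩

set_option maxHeartbeats 2000000 in
theorem stmt4 :
    {p : ℕ × ℕ × ℕ | 0 < p.1 ∧ 0 < p.2.1 ∧ 0 < p.2.2 ∧
      p.1 * p.2.1 * p.2.2 = p.1 ^ 3 + p.2.1 + 1}.ncard = 9 := by
  have hset : {p : ℕ × ℕ × ℕ | 0 < p.1 ∧ 0 < p.2.1 ∧ 0 < p.2.2 ∧
      p.1 * p.2.1 * p.2.2 = p.1 ^ 3 + p.2.1 + 1} =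
      (↑({(1,2,2),(1,1,3),(2,9,1),(2,3,2),(2,1,5),(3,14,1),(3,2,5),(5,14,2),(5,9,3)} :
        Finset (ℕ × ℕ × ℕ)) : Set (ℕ × ℕ × ℕ)) := by
    ext ⟨x, y, z⟩
    simp only [Set.mem_setOf_eq, Finset.coe_insert, Set.mem_insert_iff,
      Finset.coe_singleton, Set.mem_singleton_iff, Prod.mk.injEq]
    constructor
    · rintro ⟨hx, hy, hz, heq⟩
      obtain ⟨hx5, hz8⟩ := mohanty_bounds x y z hx hy hz heq
      have heq2 : x * y * z = x * x * x + y + 1 := by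
        rw [show x ^ 3 = x * x * x from by ring] at heq; exact heq
      clear heq
      interval_cases x <;> interval_cases z <;> omega
    · rintro (⟨rfl,rfl,rfl⟩|⟨rfl,rfl,rfl⟩|⟨rfl,rfl,rfl⟩|⟨rfl,rfl,rfl⟩|⟨rfl,rfl,rfl⟩|⟨rfl,rfl,rfl⟩|⟨rfl,rfl,rfl⟩|⟨rfl,rfl,rfl⟩|⟨rfl,rfl,rfl⟩) <;> norm_num
  rw [hset, Set.ncard_coe_finset]
  decide
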